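/- If σ is a transposition such that gσ has one more cycle than g (i.e., multiplying by σ splits a cycle of g of length a into two cycles of lengths b and c with a = b + c), then for z ∈ ℝ^m with z_j ≥ 0 and m > 1, k_z(g, e) ≤ k_z(gσ, e). If moreover z_j > 0 for at least two distinct indices j, the inequality is strict. -/

import Mathlib

open Equiv Equiv.Perm Finset

/-- The cycle lengths of a permutation, including fixed points as cycles of length 1. -/
def cycleMu {n : ℕ} (g : Equiv.Perm (Fin n)) : Multiset ℕ :=
  g.cycleType + Multiset.replicate (n - g.cycleType.sum) 1

/-- The power sum kernel `k_z(g,h) = p_{μ(g h⁻¹)}(z) = ∏_j Σ_i z_i^{μ_j}`. -/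
def powerSumKernel {n m : ℕ} (z : Fin m → ℝ) (g h : Equiv.Perm (Fin n)) : ℝ :=
  ((cycleMu (g * h⁻¹)).map (fun d => ∑ i, z i ^ d)).prod

/-- The Cayley graph of `S_n` with respect to the set of all transpositions. -/
def cayleyGraph (n : ℕ) : SimpleGraph (Equiv.Perm (Fin n)) :=
  SimpleGraph.fromRel (fun g h => (g * h⁻¹).IsSwap)

namespace PSKAux

variable {n m : ℕ}

instance (g : Equiv.Perm (Fin n)) : DecidableRel (Equiv.Perm.SameCycle.setoid g).r :=
  fun a b => inferInstanceAs (Decidable (g.SameCycle a b))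

/-- The set of colorings invariant under `g`. -/
def invSet (g : Equiv.Perm (Fin n)) (m : ℕ) : Finset (Fin n → Fin m) :=
  Finset.univ.filter (fun φ => ∀ w, φ (g w) = φ w)

lemma invariant_pow {g : Equiv.Perm (Fin n)} {φ : Fin n → Fin m}
    (hφ : ∀ w, φ (g w) = φ w) : ∀ (p : ℕ) (w : Fin n), φ ((g ^ p) w) = φ w := by
  intro p
  induction p with
  | zero => intro w; simp
  | succ p ih =>
    intro w
    rw [pow_succ, Equiv.Perm.mul_apply, ih (g w), hφ w]

lemma invariant_sameCycle {g : Equiv.Perm (Fin n)} {φ : Fin n → Fin m}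
    (hφ : ∀ w, φ (g w) = φ w) {u v : Fin n} (h : g.SameCycle u v) : φ u = φ v := by
  obtain ⟨i, _, rfl⟩ := h.exists_pow_eq'
  exact (invariant_pow hφ i u).symm

lemma sameCycle_of_fixed {g : Equiv.Perm (Fin n)} {u v : Fin n}
    (hu : g u = u) (h : g.SameCycle u v) : v = u := by
  obtain ⟨i, _, rfl⟩ := h.exists_pow_eq'
  clear * - hu
  induction i with
  | zero => simp
  | succ p ih => rw [pow_succ, Equiv.Perm.mul_apply, hu, ih]

lemma fixed_of_sameCycle {g : Equiv.Perm (Fin n)} {u v : Fin n}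
    (hu : g u = u) (h : g.SameCycle u v) : g v = v := by
  rw [sameCycle_of_fixed hu h]; exact hu

set_option maxHeartbeats 1000000 in
/-- Key identity: the power-sum product equals a sum over invariant colorings. -/
lemma keyIdentity (z : Fin m → ℝ) (g : Equiv.Perm (Fin n)) :
    ((cycleMu g).map (fun d => ∑ i, z i ^ d)).prod
      = ∑ φ ∈ invSet g m, ∏ w, z (φ w) := by
  classical
  set Q := Quotient (Equiv.Perm.SameCycle.setoid g) with hQ
  have hmk : ∀ u v : Fin n, (Quotient.mk _ u : Q) = Quotient.mk _ v ↔ g.SameCycle u v := by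
    intro u v; exact Quotient.eq''
  set size : Q → ℕ := fun q => (Finset.univ.filter (fun w => (Quotient.mk _ w : Q) = q)).card
    with hsize
  -- Step A : sum over invariant colorings = sum over colorings of the quotient
  have stepA : ∑ φ ∈ invSet g m, ∏ w, z (φ w)
      = ∑ ψ : Q → Fin m, ∏ q, z (ψ q) ^ size q := by
    refine Finset.sum_nbij' (fun φ => fun q : Q => φ q.out)
      (fun ψ => fun w => ψ (Quotient.mk _ w)) ?_ ?_ ?_ ?_ ?_
    · intro a _; exact Finset.mem_univ _
    · intro ψ _
      simp only [invSet, Finset.mem_filter, Finset.mem_univ, true_and]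
      intro w
      exact congrArg ψ ((hmk _ _).2 (Equiv.Perm.sameCycle_apply_left.2
        (Equiv.Perm.SameCycle.refl _ _)))
    · intro φ hφ
      simp only [invSet, Finset.mem_filter, Finset.mem_univ, true_and] at hφ
      funext w
      exact invariant_sameCycle hφ ((hmk _ _).1 (Quotient.out_eq _))
    · intro ψ _
      funext q
      exact congrArg ψ (Quotient.out_eq q)
    · intro φ hφ
      simp only [invSet, Finset.mem_filter, Finset.mem_univ, true_and] at hφ
      rw [← Finset.prod_fiberwise Finset.univ (fun w => (Quotient.mk _ w : Q))
        (fun w => z (φ w))]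
      refine Finset.prod_congr rfl (fun q _ => ?_)
      rw [hsize]
      rw [← Finset.prod_const]
      refine Finset.prod_congr rfl (fun w hw => ?_)
      simp only [Finset.mem_filter, Finset.mem_univ, true_and] at hw
      congr 1
      refine invariant_sameCycle hφ ?_
      exact (hmk _ _).1 (by rw [hw, Quotient.out_eq])
  -- Step B : swap sum and product
  have stepB : ∑ ψ : Q → Fin m, ∏ q, z (ψ q) ^ size q
      = ∏ q : Q, ∑ i, z i ^ size q := (Fintype.prod_sum (fun q i => z i ^ size q)).symm
  -- Step C : the product over the quotient equals the cycleMu product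
  have sizes : ∀ u : Fin n, g u ≠ u →
      size (Quotient.mk _ u) = (g.cycleOf u).support.card := by
    intro u hu
    have hfil : (Finset.univ.filter (fun w => (Quotient.mk _ w : Q) = Quotient.mk _ u))
        = (g.cycleOf u).support := by
      ext w
      simp only [Finset.mem_filter, Finset.mem_univ, true_and,
        Equiv.Perm.mem_support_cycleOf_iff, hmk]
      constructor
      · intro h; exact ⟨h.symm, Equiv.Perm.mem_support.2 hu⟩
      · intro h; exact h.1.symm
    exact congrArg Finset.card hfil
  have size_fixed : ∀ u : Fin n, g u = u → size (Quotient.mk _ u) = 1 := by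
    intro u hu
    rw [hsize]
    rw [Finset.card_eq_one]
    refine ⟨u, ?_⟩
    ext w
    simp only [Finset.mem_filter, Finset.mem_univ, true_and, Finset.mem_singleton, hmk]
    constructor
    · intro h; exact sameCycle_of_fixed hu h.symm
    · rintro rfl; exact Equiv.Perm.SameCycle.refl _ _
  have stepC : ∏ q : Q, (∑ i, z i ^ size q)
      = ((cycleMu g).map (fun d => ∑ i, z i ^ d)).prod := by
    set F : ℕ → ℝ := fun d => ∑ i, z i ^ d with hF
    have hsplitprod : ((cycleMu g).map F).prod
        = ((g.cycleType).map F).prod * F 1 ^ (n - g.support.card) := by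
      rw [cycleMu, Multiset.map_add, Multiset.prod_add, Multiset.map_replicate,
        Multiset.prod_replicate, Equiv.Perm.sum_cycleType]
    set P : Q → Prop := fun q => g q.out ≠ q.out with hP
    have hPdec : DecidablePred P := fun q => by rw [hP]; exact inferInstance
    rw [← Finset.prod_filter_mul_prod_filter_not Finset.univ P (fun q => F (size q))]
    rw [hsplitprod]
    congr 1
    · -- product over non-fixed classes = product over cycle factors
      have : ((g.cycleType).map F).prod
          = ∏ c ∈ g.cycleFactorsFinset, F c.support.card := by
        rw [Equiv.Perm.cycleType_def, Multiset.map_map,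
          Finset.prod_eq_multiset_prod]
        rfl
      rw [this]
      refine Finset.prod_nbij (fun q => g.cycleOf q.out) ?_ ?_ ?_ ?_
      · intro q hq
        simp only [Finset.mem_filter, Finset.mem_univ, true_and, hP] at hq
        exact Equiv.Perm.cycleOf_mem_cycleFactorsFinset_iff.2 (Equiv.Perm.mem_support.2 hq)
      · intro q hq r hr hqr
        simp only [Finset.mem_coe, Finset.mem_filter, Finset.mem_univ, true_and, hP]
          at hq hr
        have hq' : q.out ∈ (g.cycleOf q.out).support :=
          Equiv.Perm.mem_support_cycleOf_iff.2
            ⟨Equiv.Perm.SameCycle.refl _ _, Equiv.Perm.mem_support.2 hq⟩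
        replace hqr : g.cycleOf q.out = g.cycleOf r.out := hqr
        rw [hqr] at hq'
        have : g.SameCycle r.out q.out := (Equiv.Perm.mem_support_cycleOf_iff.1 hq').1
        calc q = Quotient.mk _ q.out := (Quotient.out_eq q).symm
          _ = Quotient.mk _ r.out := ((hmk _ _).2 this.symm)
          _ = r := Quotient.out_eq r
      · intro c hc
        simp only [Finset.coe_filter, Finset.mem_univ, true_and, Set.mem_image,
          Set.mem_setOf_eq]
        have hc' := hc
        rw [Finset.mem_coe, Equiv.Perm.mem_cycleFactorsFinset_iff] at hc'
        obtain ⟨a, ha⟩ := hc'.1.nonempty_support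
        have hca : c = g.cycleOf a := Equiv.Perm.cycle_is_cycleOf ha (Finset.mem_coe.2 hc)
        have hga : g a ≠ a := by
          have : c a ≠ a := Equiv.Perm.mem_support.1 ha
          rwa [hc'.2 a ha] at this
        refine ⟨Quotient.mk _ a, ?_, ?_⟩
        · rw [hP]
          have hsc : g.SameCycle a (Quotient.mk _ a : Q).out :=
            (hmk _ _).1 (Quotient.out_eq _).symm
          intro hfix
          exact hga (fixed_of_sameCycle hfix hsc.symm)
        · have hsc : g.SameCycle (Quotient.mk _ a : Q).out a :=
            (hmk _ _).1 (Quotient.out_eq _)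
          rw [hca, hsc.cycleOf_eq]
      · intro q hq
        simp only [Finset.mem_filter, Finset.mem_univ, true_and, hP] at hq
        have hs := sizes q.out hq
        rw [Quotient.out_eq] at hs
        exact congrArg F hs
    · -- product over fixed classes
      have hone : ∀ q ∈ Finset.univ.filter (fun q => ¬ P q), F (size q) = F 1 := by
        intro q hq
        simp only [Finset.mem_filter, Finset.mem_univ, true_and, hP, not_not] at hq
        have hs := size_fixed q.out hq
        rw [Quotient.out_eq] at hs
        rw [hs]
      rw [Finset.prod_congr rfl hone, Finset.prod_const]
      congr 1
      rw [show n - #g.support = #g.supportᶜ by rw [Finset.card_compl, Fintype.card_fin]]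
      refine Finset.card_nbij (fun q => q.out) ?_ ?_ ?_
      · intro q hq
        simp only [Finset.mem_coe, Finset.mem_filter, Finset.mem_univ, true_and, hP, not_not] at hq
        simp only [Finset.mem_coe, Finset.coe_compl, Set.mem_compl_iff,
          Finset.mem_compl, Equiv.Perm.mem_support, not_not]
        exact hq
      · intro q hq r hr hqr
        replace hqr : Quotient.out q = Quotient.out r := hqr
        calc q = Quotient.mk _ q.out := (Quotient.out_eq q).symm
          _ = Quotient.mk _ r.out := by rw [hqr]
          _ = r := Quotient.out_eq r
      · intro u hu
        simp only [Finset.coe_compl, Set.mem_compl_iff, Finset.mem_coe,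
          Equiv.Perm.mem_support, not_not] at hu
        simp only [Finset.coe_filter, Finset.mem_univ, true_and, Set.mem_image,
          Set.mem_setOf_eq]
        refine ⟨Quotient.mk _ u, ?_, ?_⟩
        · rw [hP, not_not]
          have hsc : g.SameCycle u (Quotient.mk _ u : Q).out :=
            (hmk _ _).1 (Quotient.out_eq _).symm
          exact fixed_of_sameCycle hu hsc
        · have hsc : g.SameCycle u (Quotient.mk _ u : Q).out :=
            (hmk _ _).1 (Quotient.out_eq _).symm
          exact (sameCycle_of_fixed hu hsc)
  rw [stepA, stepB, stepC]


lemma fix_pow {g : Equiv.Perm (Fin n)} {x : Fin n} {a : ℕ} (h : (g ^ a) x = x) :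
    ∀ t, (g ^ (a * t)) x = x := by
  intro t
  induction t with
  | zero => simp
  | succ t ih =>
    rw [Nat.mul_succ, pow_add, Equiv.Perm.mul_apply, h, ih]

lemma exists_return (g : Equiv.Perm (Fin n)) (x : Fin n) :
    ∃ a, 0 < a ∧ (g ^ a) x = x :=
  ⟨orderOf g, orderOf_pos g, by rw [pow_orderOf_eq_one]; simp⟩

/-- If `x` and `y` lie on the same cycle of `g`, then multiplying by `swap x y`
separates them. -/
lemma not_sameCycle_mul_swap {g : Equiv.Perm (Fin n)} {x y : Fin n} (hxy : x ≠ y)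
    (hs : g.SameCycle x y) : ¬ (g * Equiv.swap x y).SameCycle x y := by
  have hex := exists_return g x
  set a := Nat.find hex with ha
  obtain ⟨hapos, hax⟩ := Nat.find_spec hex
  have hamin : ∀ p, 0 < p → p < a → (g ^ p) x ≠ x := fun p hp hpa hfix =>
    Nat.find_min hex hpa ⟨hp, hfix⟩
  have hmod : ∀ p : ℕ, (g ^ (p % a)) x = (g ^ p) x := by
    intro p
    conv_rhs => rw [← Nat.mod_add_div p a, pow_add, Equiv.Perm.mul_apply,
      fix_pow hax (p / a)]
  have hey : ∃ k, 0 < k ∧ (g ^ k) x = y := by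
    obtain ⟨i, _, hix⟩ := hs.exists_pow_eq'
    rcases Nat.eq_zero_or_pos i with h | h
    · subst h; simp only [pow_zero, Equiv.Perm.one_apply] at hix; exact absurd hix hxy
    · exact ⟨i, h, hix⟩
  set k := Nat.find hey with hk
  obtain ⟨hkpos, hky⟩ := Nat.find_spec hey
  have hka : k < a := by
    have h1 : (g ^ (k % a)) x = y := by rw [hmod]; exact hky
    have h0 : 0 < k % a := by
      rcases Nat.eq_zero_or_pos (k % a) with h | h
      · rw [h] at h1; simp only [pow_zero, Equiv.Perm.one_apply] at h1
        exact absurd h1 hxy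
      · exact h
    have := Nat.find_min' hey ⟨h0, h1⟩
    exact lt_of_le_of_lt this (Nat.mod_lt _ hapos)
  -- no point `g^j x` with `k < j < a` equals `y`
  have d2 : ∀ j, k < j → j < a → (g ^ j) x ≠ y := by
    intro j hkj hja hjy
    have hxx : (g ^ (a - j + k)) x = x := by
      have e1 : (g ^ (a - j)) ((g ^ j) x) = x := by
        rw [← Equiv.Perm.mul_apply, ← pow_add, Nat.sub_add_cancel hja.le, hax]
      rw [pow_add, Equiv.Perm.mul_apply, hky, ← hjy]
      exact e1
    have h1 : 0 < a - j + k := by omega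
    have h2 : a - j + k < a := by omega
    exact hamin _ h1 h2 hxx
  set S : Fin n → Prop := fun w => w = x ∨ ∃ j, k < j ∧ j < a ∧ (g ^ j) x = w with hS
  have hstep : ∀ w, S w → S ((g * Equiv.swap x y) w) := by
    intro w hw
    rcases hw with h | ⟨j, hkj, hja, hjx⟩
    · rw [h]
      have hx1 : (g * Equiv.swap x y) x = (g ^ (k + 1)) x := by
        rw [Equiv.Perm.mul_apply, Equiv.swap_apply_left, ← hky,
          ← Equiv.Perm.mul_apply, ← pow_succ']
      rw [hx1]
      rcases eq_or_lt_of_le (show k + 1 ≤ a from hka) with h | h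
      · left; rw [h, hax]
      · right; exact ⟨k + 1, Nat.lt_succ_self k, h, rfl⟩
    · rw [← hjx]
      have hwx : (g ^ j) x ≠ x := hamin j (lt_of_le_of_lt (Nat.zero_le k) hkj) hja
      have hwy : (g ^ j) x ≠ y := d2 j hkj hja
      have hx1 : (g * Equiv.swap x y) ((g ^ j) x) = (g ^ (j + 1)) x := by
        rw [Equiv.Perm.mul_apply, Equiv.swap_apply_of_ne_of_ne hwx hwy,
          ← Equiv.Perm.mul_apply, ← pow_succ']
      rw [hx1]
      rcases eq_or_lt_of_le (show j + 1 ≤ a from hja) with h | h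
      · left; rw [h, hax]
      · right; exact ⟨j + 1, Nat.lt_succ_of_lt hkj, h, rfl⟩
  have horbit : ∀ p : ℕ, S (((g * Equiv.swap x y) ^ p) x) := by
    intro p
    induction p with
    | zero => left; simp
    | succ p ih =>
      rw [pow_succ', Equiv.Perm.mul_apply]
      exact hstep _ ih
  intro hcon
  obtain ⟨i, _, hi⟩ := hcon.exists_pow_eq'
  have := horbit i
  rw [hi] at this
  rcases this with h | ⟨j, hkj, hja, hjy⟩
  · exact hxy h.symm
  · exact d2 j hkj hja hjy

/-- If `x` and `y` lie on different cycles of `g`, then multiplying by `swap x y`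
joins them. -/
lemma sameCycle_mul_swap_of_not {g : Equiv.Perm (Fin n)} {x y : Fin n} (hxy : x ≠ y)
    (hns : ¬ g.SameCycle x y) : (g * Equiv.swap x y).SameCycle x y := by
  have hex := exists_return g x
  set a := Nat.find hex with ha
  obtain ⟨hapos, hax⟩ := Nat.find_spec hex
  have hamin : ∀ p, 0 < p → p < a → (g ^ p) x ≠ x := fun p hp hpa hfix =>
    Nat.find_min hex hpa ⟨hp, hfix⟩
  have claim : ∀ d, d + 1 ≤ a → ((g * Equiv.swap x y) ^ (d + 1)) y = (g ^ (d + 1)) x := by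
    intro d
    induction d with
    | zero =>
      intro _
      rw [pow_one, pow_one, Equiv.Perm.mul_apply, Equiv.swap_apply_right]
    | succ d ih =>
      intro hda
      have ih' := ih (by omega)
      have hw1 : (g ^ (d + 1)) x ≠ x := hamin (d + 1) (by omega) (by omega)
      have hw2 : (g ^ (d + 1)) x ≠ y := fun hh =>
        hns ⟨((d + 1 : ℕ) : ℤ), by rw [zpow_natCast]; exact hh⟩
      calc ((g * Equiv.swap x y) ^ (d + 1 + 1)) y
          = (g * Equiv.swap x y) (((g * Equiv.swap x y) ^ (d + 1)) y) := by
            rw [← Equiv.Perm.mul_apply, ← pow_succ']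
        _ = (g * Equiv.swap x y) ((g ^ (d + 1)) x) := by rw [ih']
        _ = g ((g ^ (d + 1)) x) := by
            rw [Equiv.Perm.mul_apply, Equiv.swap_apply_of_ne_of_ne hw1 hw2]
        _ = (g ^ (d + 1 + 1)) x := by rw [← Equiv.Perm.mul_apply, ← pow_succ']
  have hfin : ((g * Equiv.swap x y) ^ a) y = x := by
    have := claim (a - 1) (by omega)
    rw [Nat.sub_add_cancel hapos] at this
    rw [this, hax]
  have hyx : (g * Equiv.swap x y).SameCycle y x := ⟨(a : ℤ), by rw [zpow_natCast, hfin]⟩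
  exact hyx.symm

end PSKAux

theorem powerSumKernel_mul_swap_le {n m : ℕ} (hm : 1 < m) (z : Fin m → ℝ)
    (hz : ∀ j, 0 ≤ z j) (g σ : Equiv.Perm (Fin n)) (hσ : σ.IsSwap)
    (hsplit : Multiset.card (cycleMu (g * σ)) = Multiset.card (cycleMu g) + 1) :
    powerSumKernel z g 1 ≤ powerSumKernel z (g * σ) 1 ∧
      ((∃ j l : Fin m, j ≠ l ∧ 0 < z j ∧ 0 < z l) →
        powerSumKernel z g 1 < powerSumKernel z (g * σ) 1) := by
  classical
  obtain ⟨x, y, hxy, rfl⟩ := hσ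
  have hker : ∀ h : Equiv.Perm (Fin n), powerSumKernel z h 1
      = ∑ φ ∈ PSKAux.invSet h m, ∏ w, z (φ w) := by
    intro h
    rw [powerSumKernel, inv_one, mul_one, PSKAux.keyIdentity]
  by_cases hc : g.SameCycle x y
  · -- split case
    have hnc : ¬ (g * Equiv.swap x y).SameCycle x y :=
      PSKAux.not_sameCycle_mul_swap hxy hc
    have hsub : PSKAux.invSet g m ⊆ PSKAux.invSet (g * Equiv.swap x y) m := by
      intro φ hφ
      simp only [PSKAux.invSet, Finset.mem_filter, Finset.mem_univ, true_and] at hφ ⊢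
      intro w
      rw [Equiv.Perm.mul_apply, hφ]
      rcases eq_or_ne w x with rfl | hwx
      · rw [Equiv.swap_apply_left]
        exact (PSKAux.invariant_sameCycle hφ hc).symm
      rcases eq_or_ne w y with rfl | hwy
      · rw [Equiv.swap_apply_right]
        exact PSKAux.invariant_sameCycle hφ hc
      · rw [Equiv.swap_apply_of_ne_of_ne hwx hwy]
    have hnn : ∀ φ ∈ PSKAux.invSet (g * Equiv.swap x y) m,
        φ ∉ PSKAux.invSet g m → (0:ℝ) ≤ ∏ w, z (φ w) := fun φ _ _ =>
      Finset.prod_nonneg fun w _ => hz _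
    constructor
    · rw [hker, hker]
      exact Finset.sum_le_sum_of_subset_of_nonneg hsub hnn
    · rintro ⟨j, l, hjl, hzj, hzl⟩
      set φ₀ : Fin n → Fin m :=
        fun w => if (g * Equiv.swap x y).SameCycle x w then j else l with hφ₀
      have hmem : φ₀ ∈ PSKAux.invSet (g * Equiv.swap x y) m := by
        simp only [PSKAux.invSet, Finset.mem_filter, Finset.mem_univ, true_and]
        intro w
        rw [hφ₀]
        simp only [Equiv.Perm.sameCycle_apply_right]
      have hx0 : φ₀ x = j := by rw [hφ₀]; exact if_pos (Equiv.Perm.SameCycle.refl _ _)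
      have hy0 : φ₀ y = l := by rw [hφ₀]; exact if_neg hnc
      have hnmem : φ₀ ∉ PSKAux.invSet g m := by
        intro hmem'
        simp only [PSKAux.invSet, Finset.mem_filter, Finset.mem_univ, true_and] at hmem'
        have := PSKAux.invariant_sameCycle hmem' hc
        rw [hx0, hy0] at this
        exact hjl this
      have hpos : (0:ℝ) < ∏ w, z (φ₀ w) := by
        refine Finset.prod_pos fun w _ => ?_
        rw [hφ₀]
        dsimp only
        split
        · exact hzj
        · exact hzl
      rw [hker, hker]
      exact Finset.sum_lt_sum_of_subset hsub hmem hnmem hpos hnn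
  · -- merge case : contradiction with hsplit
    exfalso
    have hyx : (g * Equiv.swap x y).SameCycle x y :=
      PSKAux.sameCycle_mul_swap_of_not hxy hc
    have hsub : PSKAux.invSet (g * Equiv.swap x y) m ⊆ PSKAux.invSet g m := by
      intro φ hφ
      simp only [PSKAux.invSet, Finset.mem_filter, Finset.mem_univ, true_and] at hφ ⊢
      intro w
      have hgw : g w = (g * Equiv.swap x y) (Equiv.swap x y w) := by
        rw [Equiv.Perm.mul_apply, Equiv.swap_apply_self]
      rw [hgw, hφ]
      rcases eq_or_ne w x with rfl | hwx
      · rw [Equiv.swap_apply_left]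
        exact (PSKAux.invariant_sameCycle hφ hyx).symm
      rcases eq_or_ne w y with rfl | hwy
      · rw [Equiv.swap_apply_right]
        exact PSKAux.invariant_sameCycle hφ hyx
      · rw [Equiv.swap_apply_of_ne_of_ne hwx hwy]
    have hcount : ∀ h : Equiv.Perm (Fin n),
        ((m : ℝ)) ^ (Multiset.card (cycleMu h)) = ((PSKAux.invSet h m).card : ℝ) := by
      intro h
      have hid := PSKAux.keyIdentity (m := m) (fun _ => (1:ℝ)) h
      have h1 : (Multiset.map (fun d => ∑ _i : Fin m, (1:ℝ) ^ d) (cycleMu h))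
          = Multiset.replicate (Multiset.card (cycleMu h)) (m : ℝ) := by
        rw [show (fun d => ∑ _i : Fin m, (1:ℝ) ^ d) = (fun _ : ℕ => (m:ℝ)) by
          funext d; simp]
        exact Multiset.map_const' _ _
      rw [h1, Multiset.prod_replicate] at hid
      rw [hid]
      simp
    have hle := Finset.card_le_card hsub
    have e1 := hcount g
    have e2 := hcount (g * Equiv.swap x y)
    rw [hsplit] at e2
    have hcast : ((PSKAux.invSet (g * Equiv.swap x y) m).card : ℝ)
        ≤ ((PSKAux.invSet g m).card : ℝ) := by exact_mod_cast hle
    rw [← e1, ← e2] at hcast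
    have hm1 : (1:ℝ) < (m:ℝ) := by exact_mod_cast hm
    have hp : (0:ℝ) < (m:ℝ) ^ (Multiset.card (cycleMu g)) := by positivity
    rw [pow_succ] at hcast
    nlinarith
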